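/- Suppose 2/5 < v_L/v_H < 2/3 and v_L(v_H − v_L) > 8(1−l)² with 0 < l < 1. Then the manipulation probability ρ* = 1 − √(v_L/(2(v_H − v_L))) and mixing probability β = 1/2 − √2·(1−l)/√(v_L(v_H − v_L)) satisfy: ρ* ∈ (0,1), β ∈ (0, 1/2), and the seller's indifference/consistency equations ρ* = 1 − 2(1−l)/((1−2β)(v_H − v_L)) and v_L/v_H = 2s/(1+2s) with s = (1−ρ*)² hold simultaneously. -/

import Mathlib

/-- Region IV (Case 1) equilibrium: the manipulation probability
`ρ* = 1 − √(vL/(2(vH − vL)))` and the seller's mixing probability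
`β = 1/2 − √2(1−l)/√(vL(vH−vL))` satisfy `ρ* ∈ (0,1)`, `β ∈ (0,1/2)`, and the
indifference/consistency equations. -/
theorem stmt6 (vL vH l : ℝ) (h0 : 0 < vL) (h1 : vL < vH) (hl0 : 0 < l) (hl1 : l < 1)
    (hr1 : 2/5 < vL / vH) (hr2 : vL / vH < 2/3)
    (hr3 : 8 * (1 - l)^2 < vL * (vH - vL)) :
    let ρstar : ℝ := 1 - Real.sqrt (vL / (2 * (vH - vL)))
    let β : ℝ := 1/2 - Real.sqrt 2 * (1 - l) / Real.sqrt (vL * (vH - vL))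
    let s : ℝ := (1 - ρstar)^2
    (0 < ρstar ∧ ρstar < 1) ∧ (0 < β ∧ β < 1/2) ∧
    ρstar = 1 - 2 * (1 - l) / ((1 - 2*β) * (vH - vL)) ∧
    vL / vH = 2 * s / (1 + 2 * s) := by
  intro ρstar β s
  have hd : 0 < vH - vL := sub_pos.2 h1
  have hvH : 0 < vH := h0.trans h1
  have hl' : 0 < 1 - l := by linarith
  have hvd : 0 < vL * (vH - vL) := mul_pos h0 hd
  have hvd' : 0 < vL / (2 * (vH - vL)) := div_pos h0 (by linarith)
  have hlt : vL / (2 * (vH - vL)) < 1 := by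
    rw [div_lt_one (by linarith)]
    have := (div_lt_iff₀ hvH).1 hr2
    linarith
  set a := Real.sqrt (vL / (2 * (vH - vL))) with ha
  have ha0 : 0 < a := Real.sqrt_pos.2 hvd'
  have ha1 : a < 1 := by
    have := Real.sqrt_lt_sqrt hvd'.le hlt
    simpa using this
  have ha2 : a ^ 2 = vL / (2 * (vH - vL)) := Real.sq_sqrt hvd'.le
  set q := Real.sqrt (vL * (vH - vL)) with hq
  have hq0 : 0 < q := Real.sqrt_pos.2 hvd
  have hq2 : q ^ 2 = vL * (vH - vL) := Real.sq_sqrt hvd.le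
  have hb0 : 0 < Real.sqrt 2 * (1 - l) / q :=
    div_pos (mul_pos (Real.sqrt_pos.2 (by norm_num)) hl') hq0
  have hb : Real.sqrt 2 * (1 - l) / q < 1 / 2 := by
    rw [div_lt_div_iff₀ hq0 (by norm_num)]
    have h2x : 2 * (Real.sqrt 2 * (1 - l)) < q := by
      rw [hq]
      rw [show (2 : ℝ) * (Real.sqrt 2 * (1 - l)) = Real.sqrt 2 * (2 * (1 - l)) by ring]
      refine (Real.lt_sqrt (by positivity)).2 ?_
      have : (Real.sqrt 2) ^ 2 = 2 := Real.sq_sqrt (by norm_num)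
      nlinarith [hl'.le]
    linarith
  have hkey : a * (Real.sqrt 2 * (vH - vL)) = q := by
    have h2 : (Real.sqrt 2) ^ 2 = 2 := Real.sq_sqrt (by norm_num)
    have hsq : (a * (Real.sqrt 2 * (vH - vL))) ^ 2 = q ^ 2 := by
      rw [hq2, mul_pow, mul_pow, ha2, h2]
      field_simp
    have hx : 0 ≤ a * (Real.sqrt 2 * (vH - vL)) := by positivity
    calc a * (Real.sqrt 2 * (vH - vL)) = Real.sqrt ((a * (Real.sqrt 2 * (vH - vL))) ^ 2) :=
          (Real.sqrt_sq hx).symm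
      _ = Real.sqrt (q ^ 2) := by rw [hsq]
      _ = q := Real.sqrt_sq hq0.le
  refine ⟨⟨by simp only [ρstar]; linarith, by simp only [ρstar]; linarith⟩,
    ⟨by simp only [β]; linarith, by simp only [β]; linarith⟩, ?_, ?_⟩
  · show 1 - a = 1 - 2 * (1 - l) / ((1 - 2 * (1/2 - Real.sqrt 2 * (1 - l) / q)) * (vH - vL))
    have h1 : (1 - 2 * (1/2 - Real.sqrt 2 * (1 - l) / q)) * (vH - vL)
        = 2 * Real.sqrt 2 * (1 - l) * (vH - vL) / q := by
      field_simp
      ring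
    rw [h1]
    have hs2 : (0:ℝ) < Real.sqrt 2 := Real.sqrt_pos.2 (by norm_num)
    have key2 : 2 * (1 - l) / (2 * Real.sqrt 2 * (1 - l) * (vH - vL) / q) = a := by
      field_simp
      linear_combination (-1 : ℝ) * hkey
    linarith [key2]
  · show vL / vH = 2 * (1 - (1 - a)) ^ 2 / (1 + 2 * (1 - (1 - a)) ^ 2)
    have : (1 - (1 - a)) ^ 2 = vL / (2 * (vH - vL)) := by rw [show 1 - (1 - a) = a by ring, ha2]
    rw [this]
    have hden : (1 : ℝ) + 2 * (vL / (2 * (vH - vL))) ≠ 0 := by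
      have : vL / (2 * (vH - vL)) > 0 := hvd'
      positivity
    field_simp
    ring
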